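/- For every analytic subset Y of a Polish space there exists an analytic subset X of Cantor space 2^ω such that the pair (X, Y) (each with its subspace topology) satisfies UU. -/

import Mathlib

open Set MeasureTheory TopologicalSpace

/-- The pair (X, Y) satisfies UU: there is an open set `U ⊆ X × Y` such that
every open `W ⊆ Y` is the cross section `{y | (x, y) ∈ U}` for exactly one `x`. -/
def UU (X Y : Type*) [TopologicalSpace X] [TopologicalSpace Y] : Prop :=
  ∃ U : Set (X × Y), IsOpen U ∧
    ∀ W : Set Y, IsOpen W → ∃! x : X, {y | (x, y) ∈ U} = W

instance cantorPolish : PolishSpace (ℕ → Bool) :=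
  @instPolishSpaceOfSeparableSpaceOfIsCompletelyMetrizableSpace _ _ inferInstance inferInstance

section Helpers

variable {α : Type*} {β : Type*} [TopologicalSpace α] [TopologicalSpace β]

private lemma an_open [PolishSpace α] {s : Set α} (hs : IsOpen s) : AnalyticSet s := by
  haveI : PolishSpace s := hs.polishSpace
  rw [← @Subtype.range_val α s]
  exact analyticSet_range_of_polishSpace continuous_subtype_val

private lemma an_inter [T2Space α] {s t : Set α} (hs : AnalyticSet s) (ht : AnalyticSet t) :
    AnalyticSet (s ∩ t) := by
  have h : s ∩ t = ⋂ b : Bool, (if b then s else t) := by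
    ext x
    simp [Bool.forall_bool, and_comm]
  rw [h]
  exact AnalyticSet.iInter fun b => by cases b <;> simpa

private lemma an_union {s t : Set α} (hs : AnalyticSet s) (ht : AnalyticSet t) :
    AnalyticSet (s ∪ t) := by
  have h : s ∪ t = ⋃ b : Bool, (if b then s else t) := by
    ext x
    simp [Bool.exists_bool, or_comm]
  rw [h]
  exact AnalyticSet.iUnion fun b => by cases b <;> simpa

private lemma an_prod_right [PolishSpace α] {s : Set β} (hs : AnalyticSet s) :
    AnalyticSet ((univ : Set α) ×ˢ s) := by
  obtain ⟨γ, tγ, pγ, f, fc, hr⟩ := analyticSet_iff_exists_polishSpace_range.1 hs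
  letI := tγ; haveI := pγ
  have h : (univ : Set α) ×ˢ s = range (fun p : α × γ => (p.1, f p.2)) := by
    ext ⟨a, b⟩
    simp only [mem_prod, mem_univ, true_and, mem_range, Prod.mk.injEq, ← hr]
    constructor
    · rintro ⟨c, rfl⟩; exact ⟨(a, c), rfl, rfl⟩
    · rintro ⟨⟨a', c⟩, rfl, rfl⟩; exact ⟨c, rfl⟩
  rw [h]
  exact analyticSet_range_of_polishSpace (continuous_fst.prodMk (fc.comp continuous_snd))

private lemma an_prod_left [PolishSpace β] {s : Set α} (hs : AnalyticSet s) :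
    AnalyticSet (s ×ˢ (univ : Set β)) := by
  obtain ⟨γ, tγ, pγ, f, fc, hr⟩ := analyticSet_iff_exists_polishSpace_range.1 hs
  letI := tγ; haveI := pγ
  have h : s ×ˢ (univ : Set β) = range (fun p : γ × β => (f p.1, p.2)) := by
    ext ⟨a, b⟩
    simp only [mem_prod, mem_univ, and_true, mem_range, Prod.mk.injEq, ← hr]
    constructor
    · rintro ⟨c, rfl⟩; exact ⟨(c, b), rfl, rfl⟩
    · rintro ⟨⟨c, b'⟩, rfl, rfl⟩; exact ⟨c, rfl⟩
  rw [h]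
  exact analyticSet_range_of_polishSpace ((fc.comp continuous_fst).prodMk continuous_snd)

private lemma bool_ext {a b : Bool} (h : a = true ↔ b = true) : a = b := by
  cases a <;> cases b <;> simp_all

end Helpers

open scoped Classical in
private lemma main_UU {Z : Type*} [TopologicalSpace Z] [PolishSpace Z]
    (C : ℕ → Set Z) (hC : IsTopologicalBasis (Set.range C)) (Y : Set Z)
    (hY : MeasureTheory.AnalyticSet Y) :
    ∃ X : Set (ℕ → Bool), MeasureTheory.AnalyticSet X ∧ UU X Y := by
  have hCopen : ∀ n, IsOpen (C n) := fun n => hC.isOpen (mem_range_self n)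
  -- the basis covers
  have hcover : ∀ z : Z, ∃ n, z ∈ C n := by
    intro z
    obtain ⟨o, ⟨n, rfl⟩, hz, -⟩ := hC.exists_subset_of_mem_open (mem_univ z) isOpen_univ
    exact ⟨n, hz⟩
  -- membership in closures via the basis
  have hmemcl : ∀ (s : Set Z) (z : Z), z ∈ closure s ↔ ∀ n, z ∈ C n → (C n ∩ s).Nonempty := by
    intro s z
    rw [hC.mem_closure_iff]
    constructor
    · intro h n hn; exact h _ (mem_range_self n) hn
    · rintro h o ⟨n, rfl⟩ hz; exact h n hz
  -- the candidate parameter set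
  set A : Set (ℕ → Z) :=
    {u | ∀ n, (∀ k, u k ∉ C n) ∨ ∃ y, y ∈ Y ∧ y ∈ C n ∧ y ∈ closure (range u)} with hA_def
  set G : Set ((ℕ → Bool) × (ℕ → Z)) :=
    {p | (∀ n, p.1 n = true ↔ ∃ k, p.2 k ∈ C n) ∧ p.2 ∈ A} with hG_def
  set X : Set (ℕ → Bool) := insert (fun _ => false) (Prod.fst '' G) with hX_def
  -- analyticity of A
  have hR : AnalyticSet {p : Z × (ℕ → Z) | p.1 ∈ closure (range p.2)} := by
    have h : {p : Z × (ℕ → Z) | p.1 ∈ closure (range p.2)} =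
        ⋂ n, ({p : Z × (ℕ → Z) | p.1 ∈ C n}ᶜ ∪ {p | ∃ k, p.2 k ∈ C n}) := by
      ext ⟨z, u⟩
      simp only [mem_setOf_eq, hmemcl, mem_iInter, mem_union, mem_compl_iff]
      refine forall_congr' fun n => ?_
      rw [or_iff_not_imp_left, not_not]
      refine imp_congr Iff.rfl ?_
      constructor
      · rintro ⟨w, hw, k, rfl⟩; exact ⟨k, hw⟩
      · rintro ⟨k, hk⟩; exact ⟨u k, hk, mem_range_self k⟩
    rw [h]
    refine AnalyticSet.iInter fun n => an_union ?_ ?_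
    · exact (((hCopen n).preimage continuous_fst).isClosed_compl).analyticSet
    · have : {p : Z × (ℕ → Z) | ∃ k, p.2 k ∈ C n} =
          ⋃ k, (fun p : Z × (ℕ → Z) => p.2 k) ⁻¹' (C n) := by
        ext p; simp
      rw [this]
      exact an_open (isOpen_iUnion fun k =>
        (hCopen n).preimage ((continuous_apply k).comp continuous_snd))
  have hA : AnalyticSet A := by
    have h : A = ⋂ n, ({u : ℕ → Z | ∀ k, u k ∉ C n} ∪
        Prod.snd '' ((Y ×ˢ (univ : Set (ℕ → Z))) ∩ ((C n ×ˢ (univ : Set (ℕ → Z))) ∩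
          {p : Z × (ℕ → Z) | p.1 ∈ closure (range p.2)}))) := by
      ext u
      simp only [hA_def, mem_setOf_eq, mem_iInter, mem_union, mem_image, mem_inter_iff,
        mem_prod, mem_univ, and_true]
      refine forall_congr' fun n => or_congr Iff.rfl ?_
      constructor
      · rintro ⟨y, hy, hyC, hycl⟩; exact ⟨(y, u), ⟨hy, ⟨hyC, hycl⟩⟩, rfl⟩
      · rintro ⟨⟨y, u'⟩, ⟨hy, hyC, hycl⟩, rfl⟩; exact ⟨y, hy, hyC, hycl⟩
    rw [h]
    refine AnalyticSet.iInter fun n => an_union ?_ ?_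
    · have : IsClosed {u : ℕ → Z | ∀ k, u k ∉ C n} := by
        have : {u : ℕ → Z | ∀ k, u k ∉ C n} = ⋂ k, (fun u : ℕ → Z => u k) ⁻¹' (C n)ᶜ := by
          ext u; simp
        rw [this]
        exact isClosed_iInter fun k => ((hCopen n).isClosed_compl).preimage (continuous_apply k)
      exact this.analyticSet
    · refine AnalyticSet.image_of_continuous ?_ continuous_snd
      exact an_inter (an_prod_left hY)
        (an_inter (an_open ((hCopen n).prod isOpen_univ)) hR)
  -- analyticity of G
  have hG : AnalyticSet G := by
    have h : G = (⋂ n, (({p : (ℕ → Bool) × (ℕ → Z) | p.1 n = true} ∩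
          {p | ∃ k, p.2 k ∈ C n}) ∪
        ({p : (ℕ → Bool) × (ℕ → Z) | p.1 n = false} ∩ {p | ∀ k, p.2 k ∉ C n}))) ∩
        ((univ : Set (ℕ → Bool)) ×ˢ A) := by
      ext ⟨x, u⟩
      simp only [hG_def, mem_setOf_eq, mem_inter_iff, mem_iInter, mem_union, mem_prod,
        mem_univ, true_and]
      refine and_congr (forall_congr' fun n => ?_) Iff.rfl
      cases hxy : x n <;> simp [hxy, not_exists]
    rw [h]
    refine an_inter (AnalyticSet.iInter fun n => an_union ?_ ?_) (an_prod_right hA)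
    · refine an_open (IsOpen.inter ?_ ?_)
      · show IsOpen ((fun p : (ℕ → Bool) × (ℕ → Z) => p.1 n) ⁻¹' {true})
        exact ((continuous_apply n).comp continuous_fst).isOpen_preimage _ (isOpen_discrete _)
      · have : {p : (ℕ → Bool) × (ℕ → Z) | ∃ k, p.2 k ∈ C n} =
            ⋃ k, (fun p : (ℕ → Bool) × (ℕ → Z) => p.2 k) ⁻¹' (C n) := by
          ext p; simp
        rw [this]
        exact isOpen_iUnion fun k => (hCopen n).preimage ((continuous_apply k).comp continuous_snd)
    · refine IsClosed.analyticSet (IsClosed.inter ?_ ?_)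
      · show IsClosed ((fun p : (ℕ → Bool) × (ℕ → Z) => p.1 n) ⁻¹' {false})
        exact (isClosed_discrete _).preimage ((continuous_apply n).comp continuous_fst)
      · have : {p : (ℕ → Bool) × (ℕ → Z) | ∀ k, p.2 k ∉ C n} =
            ⋂ k, (fun p : (ℕ → Bool) × (ℕ → Z) => p.2 k) ⁻¹' (C n)ᶜ := by
          ext p; simp
        rw [this]
        exact isClosed_iInter fun k =>
          ((hCopen n).isClosed_compl).preimage ((continuous_apply k).comp continuous_snd)
  have hX : AnalyticSet X := by
    rw [hX_def, insert_eq]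
    exact an_union (isClosed_singleton.analyticSet) (hG.image_of_continuous continuous_fst)
  refine ⟨X, hX, ?_⟩
  -- section formula
  have sec_iff : ∀ (x : ℕ → Bool) (u : ℕ → Z), (∀ n, x n = true ↔ ∃ k, u k ∈ C n) →
      ∀ z : Z, ((∃ n, x n = false ∧ z ∈ C n) ↔ z ∉ closure (range u)) := by
    intro x u hx z
    rw [hmemcl]
    constructor
    · rintro ⟨n, hxn, hzn⟩ h
      obtain ⟨w, hwC, k, rfl⟩ := h n hzn
      have := (hx n).2 ⟨k, hwC⟩
      rw [hxn] at this
      exact Bool.false_ne_true this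
    · intro h
      push_neg at h
      obtain ⟨n, hzn, hne⟩ := h
      refine ⟨n, ?_, hzn⟩
      rw [Bool.eq_false_iff]
      intro htrue
      obtain ⟨k, hk⟩ := (hx n).1 htrue
      exact (eq_empty_iff_forall_notMem.1 hne (u k)) ⟨hk, mem_range_self k⟩
  -- the universal open set
  refine ⟨{p : X × Y | ∃ n, (p.1 : ℕ → Bool) n = false ∧ (p.2 : Z) ∈ C n}, ?_, ?_⟩
  · have h : {p : X × Y | ∃ n, (p.1 : ℕ → Bool) n = false ∧ (p.2 : Z) ∈ C n} =
        ⋃ n, ((fun p : X × Y => (p.1 : ℕ → Bool) n) ⁻¹' {false} ∩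
          (fun p : X × Y => (p.2 : Z)) ⁻¹' (C n)) := by
      ext p; simp [mem_iUnion]
    rw [h]
    refine isOpen_iUnion fun n => IsOpen.inter ?_ ?_
    · show IsOpen ((fun p : ↥X × ↥Y => (p.1 : ℕ → Bool) n) ⁻¹' {false})
      exact ((continuous_apply n).comp
        (continuous_subtype_val.comp continuous_fst)).isOpen_preimage _ (isOpen_discrete _)
    · exact (hCopen n).preimage (continuous_subtype_val.comp continuous_snd)
  intro W hW
  obtain ⟨V, hVopen, hVW⟩ := isOpen_induced_iff.1 hW
  set S : Set Z := Y \ V with hS_def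
  -- trace of the closure of `S` on `Y` is `S`
  have htrace : ∀ z, z ∈ Y → z ∈ closure S → z ∈ S := by
    intro z hzY hzcl
    by_contra hzS
    have hzV : z ∈ V := by
      by_contra hzV
      exact hzS ⟨hzY, hzV⟩
    obtain ⟨w, hwV, hwS⟩ := mem_closure_iff.1 hzcl V hVopen hzV
    exact hwS.2 hwV
  -- characterization of any valid code
  have key : ∀ x : ℕ → Bool, x ∈ X →
      ({y : Y | ∃ n, x n = false ∧ (y : Z) ∈ C n} = W) →
      ∀ n, (x n = true ↔ (C n ∩ closure S).Nonempty) := by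
    intro x hxX hsec
    have hsec' : ∀ z (hz : z ∈ Y), ((∃ n, x n = false ∧ z ∈ C n) ↔ z ∈ V) := by
      intro z hz
      have := Set.ext_iff.1 hsec ⟨z, hz⟩
      rw [← hVW] at this
      exact this
    rcases hxX with hx0 | ⟨⟨x', u⟩, ⟨hxu, huA⟩, rfl⟩
    · -- x is the constant false code; then S = ∅
      have hSempty : S = ∅ := by
        ext z
        simp only [mem_empty_iff_false, iff_false]
        rintro ⟨hzY, hzV⟩
        obtain ⟨n, hn⟩ := hcover z
        have hxn : x n = false := by rw [hx0]
        exact hzV ((hsec' z hzY).1 ⟨n, hxn, hn⟩)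
      intro n
      rw [hx0]
      simp [hSempty]
    · -- x comes from a sequence u with (x, u) ∈ G
      simp only at hxu hsec' ⊢
      set F : Set Z := closure (range u) with hF_def
      have hsecF : ∀ z, z ∈ Y → (z ∉ F ↔ z ∈ V) := by
        intro z hz
        rw [← hsec' z hz]
        exact (sec_iff x' u hxu z).symm
      have hYF : ∀ z, z ∈ Y → (z ∈ F ↔ z ∈ S) := by
        intro z hz
        constructor
        · intro hzF
          refine ⟨hz, fun hzV => ?_⟩
          exact ((hsecF z hz).2 hzV) hzF
        · intro hzS
          by_contra hzF
          exact hzS.2 ((hsecF z hz).1 hzF)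
      have hFclS : F = closure S := by
        apply Subset.antisymm
        · intro z hzF
          rw [hmemcl]
          intro n hzn
          have h1 : (C n ∩ range u).Nonempty := by
            obtain ⟨w, hw1, hw2⟩ := (hmemcl (range u) z).1 hzF n hzn
            exact ⟨w, hw1, hw2⟩
          obtain ⟨w, hwC, k, rfl⟩ := h1
          rcases huA n with h | ⟨y, hyY, hyC, hycl⟩
          · exact absurd hwC (h k)
          · exact ⟨y, hyC, (hYF y hyY).1 hycl⟩
        · refine closure_minimal ?_ isClosed_closure
          intro z hzS
          exact (hYF z hzS.1).2 hzS
      intro n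
      rw [hxu n]
      constructor
      · rintro ⟨k, hk⟩
        have : u k ∈ F := subset_closure (mem_range_self k)
        rw [hFclS] at this
        exact ⟨u k, hk, this⟩
      · rintro ⟨z, hzC, hzcl⟩
        rw [← hFclS] at hzcl
        obtain ⟨w, hw1, k, rfl⟩ := (hmemcl (range u) z).1 hzcl n hzC
        exact ⟨k, hw1⟩
  -- existence of a valid code
  have exist : ∃ x₀ : X, {y : Y | ∃ n, (x₀ : ℕ → Bool) n = false ∧ (y : Z) ∈ C n} = W := by
    by_cases hS : S = ∅
    · refine ⟨⟨fun _ => false, mem_insert _ _⟩, ?_⟩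
      ext ⟨z, hz⟩
      simp only [mem_setOf_eq, true_and, ← hVW, mem_preimage]
      constructor
      · intro _
        by_contra hzV
        rw [← mem_empty_iff_false z, ← hS]
        exact ⟨hz, hzV⟩
      · intro _
        obtain ⟨n, hn⟩ := hcover z
        exact ⟨n, hn⟩
    · -- S nonempty: take a dense sequence in S
      have hSne : S.Nonempty := nonempty_iff_ne_empty.2 hS
      haveI : Nonempty S := hSne.to_subtype
      obtain ⟨v, hv⟩ := TopologicalSpace.exists_dense_seq S
      set u : ℕ → Z := fun k => (v k : Z) with hu_def
      have hranu : range u ⊆ S := by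
        rintro _ ⟨k, rfl⟩
        exact (v k).2
      have hScl : S ⊆ closure (range u) := by
        intro z hz
        have h1 : (⟨z, hz⟩ : S) ∈ closure (range v) := hv _
        have h2 : (Subtype.val '' closure (range v) : Set Z) ⊆
            closure (Subtype.val '' range v) :=
          image_closure_subset_closure_image continuous_subtype_val
        have h3 : z ∈ closure (Subtype.val '' range v) := h2 ⟨⟨z, hz⟩, h1, rfl⟩
        rwa [← range_comp] at h3
      have hclu : closure (range u) = closure S :=
        Subset.antisymm (closure_mono hranu)
          (closure_minimal hScl isClosed_closure)
      set x₀ : ℕ → Bool := fun n => decide (∃ k, u k ∈ C n) with hx₀_def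
      have hx₀ : ∀ n, x₀ n = true ↔ ∃ k, u k ∈ C n := by
        intro n; simp [hx₀_def]
      have huA : u ∈ A := by
        intro n
        by_cases h : ∃ k, u k ∈ C n
        · obtain ⟨k, hk⟩ := h
          exact Or.inr ⟨u k, (hranu (mem_range_self k)).1, hk,
            subset_closure (mem_range_self k)⟩
        · exact Or.inl (by push_neg at h; exact h)
      refine ⟨⟨x₀, Or.inr ⟨(x₀, u), ⟨hx₀, huA⟩, rfl⟩⟩, ?_⟩
      ext ⟨z, hz⟩
      simp only [mem_setOf_eq, ← hVW, mem_preimage]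
      rw [sec_iff x₀ u hx₀ z, hclu]
      constructor
      · intro hzcl
        by_contra hzV
        exact hzcl (subset_closure ⟨hz, hzV⟩)
      · intro hzV hzcl
        exact (htrace z hz hzcl).2 hzV
  obtain ⟨x₀, hx₀sec⟩ := exist
  refine ⟨x₀, hx₀sec, ?_⟩
  intro x hxsec
  have h1 := key (x : ℕ → Bool) x.2 hxsec
  have h2 := key (x₀ : ℕ → Bool) x₀.2 hx₀sec
  exact Subtype.ext (funext fun n => bool_ext ((h1 n).trans (h2 n).symm))

theorem stmt_14 (Z : Type*) [TopologicalSpace Z] [PolishSpace Z] (Y : Set Z)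
    (hY : MeasureTheory.AnalyticSet Y) :
    ∃ X : Set (ℕ → Bool), MeasureTheory.AnalyticSet X ∧ UU X Y := by
  rcases isEmpty_or_nonempty Z with hZ | hZ
  · -- Z empty: Y is empty, take a singleton X
    haveI : IsEmpty Y := ⟨fun y => hZ.false y.1⟩
    refine ⟨{fun _ => false}, isClosed_singleton.analyticSet, ?_⟩
    refine ⟨∅, isOpen_empty, ?_⟩
    intro W hW
    refine ⟨⟨fun _ => false, rfl⟩, ?_, ?_⟩
    · rw [Set.eq_empty_of_isEmpty W]
      exact Set.eq_empty_of_isEmpty _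
    · intro x hx
      exact Subtype.ext x.2
  · -- Z nonempty: pick a countable basis indexed by ℕ
    obtain ⟨b, hbcount, -, hbbasis⟩ := exists_countable_basis Z
    have hbne : b.Nonempty := by
      obtain ⟨z⟩ := hZ
      obtain ⟨o, ho, -, -⟩ := hbbasis.exists_subset_of_mem_open (mem_univ z) isOpen_univ
      exact ⟨o, ho⟩
    obtain ⟨C, hC⟩ := hbcount.exists_eq_range hbne
    exact main_UU C (hC ▸ hbbasis) Y hY
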